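/- arXiv:2502.18967 — 6 statements merged into one kernel-verified Lean document; each statement's English description precedes it below -/
import Mathlib

section
/- Let Γ be a lattice in a finite-dimensional real inner product space V that admits an orthogonal basis b₁,…,b_r (i.e. Γ = ℤ-span of pairwise orthogonal vectors). Then any two orthogonal bases of Γ agree up to permutation and sign changes of the basis vectors. -/
/-- If a family of nonnegative integers sums to 1, exactly one of them is 1 and the rest are 0. -/
lemma sum_eq_one_int {r : ℕ} (f : Fin r → ℤ) (hnn : ∀ i, 0 ≤ f i)
    (hsum : ∑ i, f i = 1) : ∃ i0, f i0 = 1 ∧ ∀ i, i ≠ i0 → f i = 0 := by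
  have hex : ∃ i0, 0 < f i0 := by
    by_contra h
    push_neg at h
    have : ∑ i, f i ≤ 0 := Finset.sum_nonpos (fun i _ => h i)
    omega
  obtain ⟨i0, hi0⟩ := hex
  have hsplit : ∑ i, f i = f i0 + ∑ i ∈ Finset.univ.erase i0, f i := by
    rw [add_comm, Finset.sum_erase_add _ _ (Finset.mem_univ i0)]
  have hrest_nonneg : 0 ≤ ∑ i ∈ Finset.univ.erase i0, f i :=
    Finset.sum_nonneg (fun i _ => hnn i)
  have hrest : ∑ i ∈ Finset.univ.erase i0, f i = 0 := by omega
  refine ⟨i0, by omega, fun i hi => ?_⟩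
  have := (Finset.sum_eq_zero_iff_of_nonneg (fun i _ => hnn i)).mp hrest i
    (Finset.mem_erase.mpr ⟨hi, Finset.mem_univ i⟩)
  exact this

/-- Uniqueness of an orthogonal basis of a lattice up to permutation and signs. -/
theorem orthogonal_lattice_basis_unique
    {V : Type*} [NormedAddCommGroup V] [InnerProductSpace ℝ V] [FiniteDimensional ℝ V]
    {r : ℕ} (b c : Fin r → V)
    (hb0 : ∀ j, b j ≠ 0) (hbo : ∀ i j, i ≠ j → (inner ℝ (b i) (b j) : ℝ) = 0)
    (hc0 : ∀ j, c j ≠ 0) (hco : ∀ i j, i ≠ j → (inner ℝ (c i) (c j) : ℝ) = 0)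
    (hspan : Submodule.span ℤ (Set.range b) = Submodule.span ℤ (Set.range c)) :
    ∃ (σ : Equiv.Perm (Fin r)) (ε : Fin r → ℝ),
      (∀ j, ε j = 1 ∨ ε j = -1) ∧ ∀ j, c j = ε j • b (σ j) := by
  -- positivity of self inner products
  have hbpos : ∀ i, (0:ℝ) < inner ℝ (b i) (b i) := fun i =>
    lt_of_le_of_ne real_inner_self_nonneg (Ne.symm (inner_self_ne_zero.mpr (hb0 i)))
  have hcpos : ∀ j, (0:ℝ) < inner ℝ (c j) (c j) := fun j =>
    lt_of_le_of_ne real_inner_self_nonneg (Ne.symm (inner_self_ne_zero.mpr (hc0 j)))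
  -- express each c j with integer coefficients in b, and vice versa
  have hcmem : ∀ j, c j ∈ Submodule.span ℤ (Set.range b) := fun j =>
    hspan ▸ Submodule.subset_span ⟨j, rfl⟩
  have hbmem : ∀ i, b i ∈ Submodule.span ℤ (Set.range c) := fun i =>
    hspan ▸ Submodule.subset_span ⟨i, rfl⟩
  choose M hM using fun j => (Submodule.mem_span_range_iff_exists_fun ℤ).mp (hcmem j)
  choose N hN using fun i => (Submodule.mem_span_range_iff_exists_fun ℤ).mp (hbmem i)
  -- inner products
  have hMinner : ∀ i j, (inner ℝ (b i) (c j) : ℝ) = (M j i : ℝ) * inner ℝ (b i) (b i) := by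
    intro i j
    rw [← hM j, inner_sum]
    rw [Finset.sum_eq_single i]
    · rw [← Int.cast_smul_eq_zsmul ℝ, real_inner_smul_right]
    · intro k _ hk
      rw [← Int.cast_smul_eq_zsmul ℝ, real_inner_smul_right, hbo i k (Ne.symm hk), mul_zero]
    · simp
  have hNinner : ∀ i j, (inner ℝ (c j) (b i) : ℝ) = (N i j : ℝ) * inner ℝ (c j) (c j) := by
    intro i j
    rw [← hN i, inner_sum]
    rw [Finset.sum_eq_single j]
    · rw [← Int.cast_smul_eq_zsmul ℝ, real_inner_smul_right]
    · intro k _ hk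
      rw [← Int.cast_smul_eq_zsmul ℝ, real_inner_smul_right, hco j k (Ne.symm hk), mul_zero]
    · simp
  -- relation between M and N
  have hMN : ∀ i j, (M j i : ℝ) * inner ℝ (b i) (b i) = (N i j : ℝ) * inner ℝ (c j) (c j) := by
    intro i j
    rw [← hMinner, ← hNinner, real_inner_comm]
  -- products are nonnegative
  have hprod_nonneg : ∀ i j, 0 ≤ M j i * N i j := by
    intro i j
    have h : ((M j i * N i j : ℤ) : ℝ) * inner ℝ (c j) (c j)
        = (M j i : ℝ)^2 * inner ℝ (b i) (b i) := by
      push_cast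
      rw [mul_assoc, ← hMN i j]; ring
    have h2 : (0:ℝ) ≤ ((M j i * N i j : ℤ) : ℝ) := by
      rw [← mul_le_mul_iff_of_pos_right (hcpos j)]
      rw [zero_mul, h]
      exact mul_nonneg (sq_nonneg _) (le_of_lt (hbpos i))
    exact_mod_cast h2
  -- product zero implies M zero
  have hprod_zero : ∀ i j, M j i * N i j = 0 → M j i = 0 := by
    intro i j h
    have h1 : (M j i : ℝ)^2 * inner ℝ (b i) (b i) = 0 := by
      have : ((M j i * N i j : ℤ) : ℝ) * inner ℝ (c j) (c j) = 0 := by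
        rw [h]; simp
      push_cast at this
      rw [mul_assoc, ← hMN i j] at this
      rw [← this]; ring
    have h2 : (M j i : ℝ) = 0 := by
      rcases mul_eq_zero.mp h1 with h' | h'
      · exact pow_eq_zero_iff (by norm_num) |>.mp h'
      · exact absurd h' (ne_of_gt (hbpos i))
    exact_mod_cast h2
  -- column sums: for each j, ∑ i, M j i * N i j = 1
  have hcol : ∀ j, ∑ i, M j i * N i j = 1 := by
    intro j
    have hsum : (inner ℝ (c j) (c j) : ℝ)
        = ∑ i, (M j i : ℝ) * ((N i j : ℝ) * inner ℝ (c j) (c j)) := by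
      nth_rewrite 1 [← hM j]
      rw [sum_inner]
      refine Finset.sum_congr rfl fun i _ => ?_
      rw [← Int.cast_smul_eq_zsmul ℝ, real_inner_smul_left, hMinner i j, hMN i j]
    have h : ∑ i, ((M j i : ℝ) * (N i j : ℝ)) * inner ℝ (c j) (c j)
        = (1 : ℝ) * inner ℝ (c j) (c j) := by
      rw [one_mul]
      conv_rhs => rw [hsum]
      exact Finset.sum_congr rfl fun i _ => by ring
    rw [← Finset.sum_mul] at h
    have h2 := mul_right_cancel₀ (ne_of_gt (hcpos j)) h
    exact_mod_cast h2
  -- row sums: for each i, ∑ j, M j i * N i j = 1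
  have hrow : ∀ i, ∑ j, M j i * N i j = 1 := by
    intro i
    have hsum : (inner ℝ (b i) (b i) : ℝ)
        = ∑ j, (N i j : ℝ) * ((M j i : ℝ) * inner ℝ (b i) (b i)) := by
      nth_rewrite 1 [← hN i]
      rw [sum_inner]
      refine Finset.sum_congr rfl fun j _ => ?_
      rw [← Int.cast_smul_eq_zsmul ℝ, real_inner_smul_left, hNinner i j, ← hMN i j]
    have h : ∑ j, ((M j i : ℝ) * (N i j : ℝ)) * inner ℝ (b i) (b i)
        = (1 : ℝ) * inner ℝ (b i) (b i) := by
      rw [one_mul]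
      conv_rhs => rw [hsum]
      exact Finset.sum_congr rfl fun j _ => by ring
    rw [← Finset.sum_mul] at h
    have h2 := mul_right_cancel₀ (ne_of_gt (hbpos i)) h
    exact_mod_cast h2
  -- for each j, a unique i with product 1
  choose σ' hσ1 hσ2 using fun j =>
    sum_eq_one_int (fun i => M j i * N i j) (fun i => hprod_nonneg i j) (hcol j)
  -- σ' is injective
  have hinj : Function.Injective σ' := by
    intro j j' hjj'
    obtain ⟨j0, hj0, hj0'⟩ :=
      sum_eq_one_int (fun k => M k (σ' j) * N (σ' j) k)
        (fun k => hprod_nonneg (σ' j) k) (hrow (σ' j))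
    have h1 : j = j0 := by
      by_contra hne
      have h0 := hj0' j hne
      have h1' := hσ1 j
      omega
    have h2 : j' = j0 := by
      by_contra hne
      have h0 := hj0' j' hne
      have h1' := hσ1 j'
      rw [hjj'] at h0
      omega
    rw [h1, h2]
  -- build the permutation
  let σ : Equiv.Perm (Fin r) := Equiv.ofBijective σ' (Finite.injective_iff_bijective.mp hinj)
  refine ⟨σ, fun j => (M j (σ' j) : ℝ), fun j => ?_, fun j => ?_⟩
  · rcases Int.eq_one_or_neg_one_of_mul_eq_one (hσ1 j) with h | h
    · left; show ((M j (σ' j) : ℤ) : ℝ) = 1; rw [h]; norm_num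
    · right; show ((M j (σ' j) : ℤ) : ℝ) = -1; rw [h]; norm_num
  · show c j = ((M j (σ' j) : ℤ) : ℝ) • b (σ j)
    have hσeq : σ j = σ' j := rfl
    rw [hσeq, ← hM j]
    rw [Finset.sum_eq_single (σ' j)]
    · rw [← Int.cast_smul_eq_zsmul ℝ]
    · intro i _ hi
      have : M j i = 0 := hprod_zero i j (hσ2 j i hi)
      rw [this, zero_smul]
    · simp
end

section
/- Let f be a linear isometry of a finite-dimensional real inner product space V preserving a lattice Γ with orthogonal basis b₁,…,b_r. Then f permutes the set of lines {ℝb₁,…,ℝb_r}, i.e. there is a permutation σ and signs ε_j ∈ {±1} with f(b_j) = ε_j b_{σ(j)}. -/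
open Finset

private lemma key_step {V : Type*} [NormedAddCommGroup V] [InnerProductSpace ℝ V]
    {r : ℕ} (b : Fin r → V)
    (hb0 : ∀ j, b j ≠ 0) (hbo : ∀ i j, i ≠ j → (inner ℝ (b i) (b j) : ℝ) = 0) :
    ∀ n : ℕ, ∀ f : V ≃ₗᵢ[ℝ] V,
      (∀ v, v ∈ Submodule.span ℤ (Set.range b) ↔ f v ∈ Submodule.span ℤ (Set.range b)) →
      ∀ j : Fin r, (Finset.univ.filter (fun k => ‖b k‖ < ‖b j‖)).card = n →
      ∃ (i : Fin r) (ε : ℝ), (ε = 1 ∨ ε = -1) ∧ f (b j) = ε • b i ∧ ‖b i‖ = ‖b j‖ := by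
  intro n
  induction n using Nat.strong_induction_on with
  | _ n IH =>
    intro f hf j hj
    have hf' : ∀ v, v ∈ Submodule.span ℤ (Set.range b) ↔
        f.symm v ∈ Submodule.span ℤ (Set.range b) := by
      intro v
      have := hf (f.symm v)
      rw [f.apply_symm_apply] at this
      exact this.symm
    have hmem : f (b j) ∈ Submodule.span ℤ (Set.range b) :=
      (hf (b j)).1 (Submodule.subset_span ⟨j, rfl⟩)
    obtain ⟨a, ha⟩ := (Submodule.mem_span_range_iff_exists_fun ℤ).1 hmem
    have ha' : ∑ k, ((a k : ℝ)) • b k = f (b j) := by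
      rw [← ha]
      exact Finset.sum_congr rfl fun k _ => by rw [Int.cast_smul_eq_zsmul]
    -- coefficient formula
    have hcoef : ∀ i, (inner ℝ (b i) (f (b j)) : ℝ) = (a i : ℝ) * ‖b i‖ ^ 2 := by
      intro i
      rw [← ha', inner_sum]
      rw [Finset.sum_eq_single i]
      · rw [real_inner_smul_right, real_inner_self_eq_norm_sq]
      · intro k _ hk
        rw [real_inner_smul_right, hbo i k (Ne.symm hk), mul_zero]
      · intro h; exact absurd (Finset.mem_univ i) h
    -- small-norm coefficients vanish
    have hsmall : ∀ i, ‖b i‖ < ‖b j‖ → a i = 0 := by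
      intro i hi
      have hsub : (Finset.univ.filter (fun k => ‖b k‖ < ‖b i‖)) ⊂
          (Finset.univ.filter (fun k => ‖b k‖ < ‖b j‖)) := by
        constructor
        · intro k hk
          simp only [Finset.mem_filter, Finset.mem_univ, true_and] at hk ⊢
          exact hk.trans hi
        · intro hcon
          have := hcon (by simp only [Finset.mem_filter, Finset.mem_univ, true_and]; exact hi)
          simp only [Finset.mem_filter, Finset.mem_univ, true_and] at this
          exact lt_irrefl _ this
      have hlt : (Finset.univ.filter (fun k => ‖b k‖ < ‖b i‖)).card < n := by
        rw [← hj]; exact Finset.card_lt_card hsub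
      obtain ⟨k, ε, hε, hk, hknorm⟩ := IH _ hlt f.symm hf' i rfl
      have hkj : k ≠ j := by
        intro h
        rw [h] at hknorm
        rw [← hknorm] at hi
        exact lt_irrefl _ hi
      have h1 : (inner ℝ (b i) (f (b j)) : ℝ) = 0 := by
        have : (inner ℝ (b i) (f (b j)) : ℝ) = inner ℝ (f.symm (b i)) (b j) := by
          rw [← f.inner_map_map (f.symm (b i)) (b j), f.apply_symm_apply]
        rw [this, hk, real_inner_smul_left, hbo k j hkj, mul_zero]
      have h2 := hcoef i
      rw [h1] at h2
      have hbne : ‖b i‖ ^ 2 ≠ 0 := pow_ne_zero _ (norm_ne_zero_iff.2 (hb0 i))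
      have : (a i : ℝ) = 0 := by
        rcases mul_eq_zero.1 h2.symm with h | h
        · exact h
        · exact absurd h hbne
      exact_mod_cast this
    -- Pythagoras
    have hpyth : ‖b j‖ ^ 2 = ∑ i, (a i : ℝ) ^ 2 * ‖b i‖ ^ 2 := by
      have h1 : ‖f (b j)‖ = ‖b j‖ := f.norm_map _
      have h2 : (inner ℝ (f (b j)) (f (b j)) : ℝ) = ‖b j‖ ^ 2 := by
        rw [real_inner_self_eq_norm_sq, h1]
      rw [← h2]
      conv_lhs => rw [← ha']
      rw [sum_inner]
      apply Finset.sum_congr rfl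
      intro i _
      rw [real_inner_smul_left, ha', hcoef i]
      ring
    -- the support of a is a single index
    set s : Finset (Fin r) := Finset.univ.filter (fun i => a i ≠ 0) with hs
    have hsum_s : ∑ i ∈ s, (a i : ℝ) ^ 2 * ‖b i‖ ^ 2 = ‖b j‖ ^ 2 := by
      rw [hpyth]
      apply Finset.sum_subset (Finset.filter_subset _ _)
      intro i _ hi
      simp only [hs, Finset.mem_filter, Finset.mem_univ, true_and, not_not] at hi
      rw [hi]; norm_num
    have hterm : ∀ i ∈ s, ‖b j‖ ^ 2 ≤ (a i : ℝ) ^ 2 * ‖b i‖ ^ 2 := by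
      intro i hi
      simp only [hs, Finset.mem_filter, Finset.mem_univ, true_and] at hi
      have h1 : (1 : ℝ) ≤ (a i : ℝ) ^ 2 := by
        have : (1 : ℤ) ≤ (a i) ^ 2 := by
          rcases lt_or_gt_of_ne hi with h | h <;> nlinarith
        exact_mod_cast this
      have h2 : ‖b j‖ ≤ ‖b i‖ := le_of_not_gt (fun hcon => hi (hsmall i hcon))
      have h3 : ‖b j‖ ^ 2 ≤ ‖b i‖ ^ 2 := by
        have := norm_nonneg (b j); nlinarith
      nlinarith
    have hpos : (0 : ℝ) < ‖b j‖ ^ 2 := by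
      have := norm_pos_iff.2 (hb0 j); positivity
    have hne : s.Nonempty := by
      rw [Finset.nonempty_iff_ne_empty]
      intro hcon
      rw [hcon, Finset.sum_empty] at hsum_s
      exact absurd hsum_s.symm (ne_of_gt hpos)
    have hcard : s.card = 1 := by
      have hcp := Finset.card_pos.2 hne
      rcases Nat.lt_or_ge s.card 2 with h | h
      · omega
      · exfalso
        obtain ⟨i₁, hi₁, i₂, hi₂, hne12⟩ := Finset.one_lt_card.1 h
        have hsub : ({i₁, i₂} : Finset (Fin r)) ⊆ s := by
          intro x hx
          simp only [Finset.mem_insert, Finset.mem_singleton] at hx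
          rcases hx with h | h <;> subst h <;> assumption
        have hp : ∑ i ∈ ({i₁, i₂} : Finset (Fin r)), (a i : ℝ) ^ 2 * ‖b i‖ ^ 2 =
            (a i₁ : ℝ) ^ 2 * ‖b i₁‖ ^ 2 + (a i₂ : ℝ) ^ 2 * ‖b i₂‖ ^ 2 :=
          Finset.sum_pair hne12
        have hle : ∑ i ∈ ({i₁, i₂} : Finset (Fin r)), (a i : ℝ) ^ 2 * ‖b i‖ ^ 2 ≤
            ∑ i ∈ s, (a i : ℝ) ^ 2 * ‖b i‖ ^ 2 :=
          Finset.sum_le_sum_of_subset_of_nonneg hsub (fun i _ _ => by positivity)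
        have t1 := hterm i₁ hi₁
        have t2 := hterm i₂ hi₂
        linarith
    obtain ⟨i₀, hi₀⟩ := Finset.card_eq_one.1 hcard
    have hai₀ : a i₀ ≠ 0 := by
      have : i₀ ∈ s := hi₀ ▸ Finset.mem_singleton_self i₀
      simpa [hs] using this
    have hzero : ∀ k, k ≠ i₀ → a k = 0 := by
      intro k hk
      by_contra hcon
      have : k ∈ s := by simp [hs, hcon]
      rw [hi₀, Finset.mem_singleton] at this
      exact hk this
    have hfb : f (b j) = (a i₀ : ℝ) • b i₀ := by
      rw [← ha']
      rw [Finset.sum_eq_single i₀]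
      · intro k _ hk
        rw [hzero k hk]; norm_num
      · intro h; exact absurd (Finset.mem_univ i₀) h
    have heq : ‖b j‖ ^ 2 = (a i₀ : ℝ) ^ 2 * ‖b i₀‖ ^ 2 := by
      rw [← hsum_s, hi₀, Finset.sum_singleton]
    have h2 : ‖b j‖ ≤ ‖b i₀‖ := le_of_not_gt (fun hcon => hai₀ (hsmall i₀ hcon))
    have h1 : (1 : ℝ) ≤ (a i₀ : ℝ) ^ 2 := by
      have : (1 : ℤ) ≤ (a i₀) ^ 2 := by
        rcases lt_or_gt_of_ne hai₀ with h | h <;> nlinarith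
      exact_mod_cast this
    have hbi : 0 < ‖b i₀‖ := norm_pos_iff.2 (hb0 i₀)
    have hsq_le : (a i₀ : ℝ) ^ 2 * ‖b i₀‖ ^ 2 ≤ ‖b i₀‖ ^ 2 := by
      rw [← heq]
      nlinarith [mul_self_le_mul_self (norm_nonneg (b j)) h2]
    have hle1 : (a i₀ : ℝ) ^ 2 ≤ 1 := by
      have hbi2 : 0 < ‖b i₀‖ ^ 2 := by positivity
      by_contra hcon
      push_neg at hcon
      nlinarith
    have hsq1 : (a i₀ : ℝ) ^ 2 = 1 := le_antisymm hle1 h1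
    have hnormeq : ‖b i₀‖ = ‖b j‖ := by
      have hsq : ‖b i₀‖ ^ 2 = ‖b j‖ ^ 2 := by rw [heq, hsq1]; ring
      exact (sq_eq_sq₀ (norm_nonneg _) (norm_nonneg _)).1 hsq
    refine ⟨i₀, (a i₀ : ℝ), ?_, hfb, hnormeq⟩
    have : a i₀ = 1 ∨ a i₀ = -1 := by
      have hsqz : a i₀ * a i₀ = 1 := by
        have : ((a i₀ : ℝ)) * (a i₀ : ℝ) = 1 := by rw [← hsq1]; ring
        exact_mod_cast this
      exact Int.isUnit_iff.1 (IsUnit.of_mul_eq_one (a i₀) hsqz)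
    rcases this with h | h <;> [left; right] <;> rw [h] <;> norm_num

/-- A linear isometry preserving a lattice with orthogonal basis permutes the basis
vectors up to sign. -/
theorem isometry_preserving_rectangular_lattice_permutes_basis
    {V : Type*} [NormedAddCommGroup V] [InnerProductSpace ℝ V] [FiniteDimensional ℝ V]
    {r : ℕ} (b : Fin r → V)
    (hb0 : ∀ j, b j ≠ 0) (hbo : ∀ i j, i ≠ j → (inner ℝ (b i) (b j) : ℝ) = 0)
    (f : V ≃ₗᵢ[ℝ] V)
    (hf : ∀ v, v ∈ Submodule.span ℤ (Set.range b) ↔ f v ∈ Submodule.span ℤ (Set.range b)) :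
    ∃ (σ : Equiv.Perm (Fin r)) (ε : Fin r → ℝ),
      (∀ j, ε j = 1 ∨ ε j = -1) ∧ ∀ j, f (b j) = ε j • b (σ j) := by
  have H : ∀ j : Fin r, ∃ (i : Fin r) (ε : ℝ), (ε = 1 ∨ ε = -1) ∧
      f (b j) = ε • b i ∧ ‖b i‖ = ‖b j‖ :=
    fun j => key_step b hb0 hbo _ f hf j rfl
  choose g ε hε hfb _ using H
  have hginj : Function.Injective g := by
    intro j k h
    by_contra hne
    have h0 : (inner ℝ (f (b j)) (f (b k)) : ℝ) = 0 := by
      rw [f.inner_map_map]; exact hbo j k hne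
    rw [hfb j, hfb k, h, real_inner_smul_left, real_inner_smul_right,
      real_inner_self_eq_norm_sq] at h0
    have hεj : ε j ≠ 0 := by rcases hε j with h' | h' <;> rw [h'] <;> norm_num
    have hεk : ε k ≠ 0 := by rcases hε k with h' | h' <;> rw [h'] <;> norm_num
    have hbk : ‖b (g k)‖ ≠ 0 := norm_ne_zero_iff.2 (hb0 (g k))
    have : ε j * (ε k * ‖b (g k)‖ ^ 2) ≠ 0 := by positivity
    exact this h0
  have hgbij : Function.Bijective g := Finite.injective_iff_bijective.1 hginj
  exact ⟨Equiv.ofBijective g hgbij, ε, hε, fun j => by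
    rw [hfb j]; rfl⟩
end

section
/- Let 𝔤 be a real Lie algebra with an invariant inner product (⟨[x,y],z⟩ = -⟨y,[x,z]⟩), and let X_j, Y_j (j = 1,…,r) be elements such that all X_j lie in an abelian subspace 𝔞, all Y_j lie in an abelian subspace 𝔟, and setting H_j := [X_j, Y_j], suppose [X_j, H_j] = -Y_j and [Y_j, H_j] = X_j for each j, and suppose ⟨H_j, H_k⟩ = 0 for j ≠ k and [X_j, [X_k, ξ]] = [X_k, [X_j, ξ]] where Y_j = [X_j, ξ] for a fixed ξ. Then ‖[X_j, Y_k]‖² = ⟨H_j, H_k⟩ = 0 for j ≠ k, so [X_j, Y_k] = 0 for j ≠ k. -/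
/-- The commutation computation for the strongly orthogonal `𝔰𝔬(3)`-triples:
under the stated relations, `⁅X j, Y k⁆ = 0` for `j ≠ k`. -/
theorem bracket_X_Y_eq_zero_of_ne
    {L : Type*} [NormedAddCommGroup L] [InnerProductSpace ℝ L]
    [LieRing L] [LieAlgebra ℝ L]
    (hinv : ∀ x y z : L, (inner ℝ ⁅x, y⁆ z : ℝ) = - inner ℝ y ⁅x, z⁆)
    {r : ℕ} (ξ : L) (X Y H : Fin r → L)
    (hY : ∀ j, Y j = ⁅X j, ξ⁆)
    (hH : ∀ j, H j = ⁅X j, Y j⁆)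
    (hXab : ∀ j k, ⁅X j, X k⁆ = 0)
    (hYab : ∀ j k, ⁅Y j, Y k⁆ = 0)
    (hXH : ∀ j, ⁅X j, H j⁆ = - Y j)
    (hYH : ∀ j, ⁅Y j, H j⁆ = X j)
    (hHorth : ∀ j k, j ≠ k → (inner ℝ (H j) (H k) : ℝ) = 0)
    (hsymm : ∀ j k, ⁅X j, ⁅X k, ξ⁆⁆ = ⁅X k, ⁅X j, ξ⁆⁆) :
    ∀ j k, j ≠ k → ⁅X j, Y k⁆ = 0 := by
  intro j k hjk
  have h1 : ⁅X j, Y k⁆ = ⁅X k, Y j⁆ := by rw [hY j, hY k]; exact hsymm j k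
  -- ⁅⁅X j, X k⁆, Y j⁆ = 0 (the zero of the Lie-ring group structure)
  have e3 : ⁅(⁅X j, X k⁆ : L), Y j⁆ =
      ⁅(@OfNat.ofNat L 0 (@Zero.toOfNat0 L (@NegZeroClass.toZero L
        (@SubNegZeroMonoid.toNegZeroClass L (@SubtractionMonoid.toSubNegZeroMonoid L
        (@SubtractionCommMonoid.toSubtractionMonoid L
        (@AddCommGroup.toDivisionAddCommMonoid L LieRing.toAddCommGroup))))))), Y j⁆ :=
    congrArg (fun t => ⁅t, Y j⁆) ((hXab j k).trans ((hXab j j).symm.trans (lie_self (X j))))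
  have e4 := e3.trans (@zero_lie L L _ LieRing.toAddCommGroup lieRingSelfModule (Y j))
  have e5 := @zero_add L (@AddMonoid.toAddZeroClass L (@SubNegMonoid.toAddMonoid L
    (@AddGroup.toSubNegMonoid L (@AddCommGroup.toAddGroup L
    (@LieRing.toAddCommGroup L _))))) ⁅X k, ⁅X j, Y j⁆⁆
  have h2 : ⁅X j, ⁅X k, Y j⁆⁆ = ⁅X k, H j⁆ :=
    ((e4 ▸ @LieRingModule.leibniz_lie L L _ LieRing.toAddCommGroup lieRingSelfModule (X j) (X k)
        (Y j)).trans e5).trans (congrArg (fun t => ⁅X k, t⁆) (hH j).symm)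
  have key : (inner ℝ ⁅X j, Y k⁆ ⁅X j, Y k⁆ : ℝ) = 0 := by
    nth_rewrite 2 [h1]
    rw [hinv, h2, ← neg_neg (inner ℝ (Y k) ⁅X k, H j⁆ : ℝ), ← hinv, ← hH,
      hHorth k j (Ne.symm hjk), neg_neg]
  have ha : ⁅⁅X j, X j⁆, ⁅X j, X j⁆⁆ = ⁅X j, X j⁆ := by
    rw [lie_self (⁅X j, X j⁆), lie_self (X j)]
  have hi := hinv (⁅X j, X j⁆) (⁅X j, X j⁆) (⁅X j, X j⁆)
  rw [ha] at hi
  have hz : (inner ℝ ⁅X j, X j⁆ ⁅X j, X j⁆ : ℝ) = 0 := by linarith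
  exact (inner_self_eq_zero.mp key).trans ((inner_self_eq_zero.mp hz).symm.trans (lie_self (X j)))
end

section
/- Let 𝔤 = 𝔨 ⊕ 𝔭 be the decomposition of a Lie algebra under an involutive automorphism σ (𝔨 the (+1)- and 𝔭 the (-1)-eigenspace), and let τ be another involutive automorphism commuting with σ, with 𝔭₊ = 𝔭 ∩ Fix(τ) and 𝔭₋ = 𝔭 ∩ Fix(-τ). Let 𝔞₊ ⊆ 𝔭₊ be maximal abelian in 𝔭₊ and 𝔞 ⊆ 𝔭 maximal abelian in 𝔭 with 𝔞₊ ⊆ 𝔞. Then 𝔞 = 𝔞₊ ⊕ (𝔞 ∩ 𝔭₋); in particular 𝔞 is τ-invariant. -/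
/-- If `z` commutes with every element of an abelian subspace `S`, then `S ⊔ span {z}`
is abelian. -/
lemma abelian_sup_span {g : Type*} [LieRing g] [LieAlgebra ℝ g]
    (S : Submodule ℝ g) (z : g) (hz : ∀ s ∈ S, ⁅z, s⁆ = 0)
    (hS : ∀ x ∈ S, ∀ y ∈ S, ⁅x, y⁆ = 0) :
    ∀ x ∈ S ⊔ (Submodule.span ℝ {z}), ∀ y ∈ S ⊔ (Submodule.span ℝ {z}), ⁅x, y⁆ = 0 := by
  intro x hx y hy
  obtain ⟨s, hs, u, hu, rfl⟩ := Submodule.mem_sup.mp hx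
  obtain ⟨t, ht, v, hv, rfl⟩ := Submodule.mem_sup.mp hy
  obtain ⟨c, rfl⟩ := Submodule.mem_span_singleton.mp hu
  obtain ⟨d, rfl⟩ := Submodule.mem_span_singleton.mp hv
  have h1 : ⁅s, t⁆ = 0 := hS s hs t ht
  have h2 : ⁅z, t⁆ = 0 := hz t ht
  have h3 : ⁅z, s⁆ = 0 := hz s hs
  have h4 : ⁅s, z⁆ = 0 := by rw [← lie_skew, h3, neg_zero]
  simp [lie_add, add_lie, lie_smul, smul_lie, h1, h2, h4]

/-- For commuting involutive automorphisms `σ, τ` of a Lie algebra, a maximal abelian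
subspace `𝔞` of `𝔭` containing a maximal abelian subspace `𝔞₊` of `𝔭₊` splits as
`𝔞 = 𝔞₊ ⊔ (𝔞 ⊓ 𝔭₋)`; in particular `𝔞` is `τ`-invariant. -/
theorem maximal_abelian_splits_under_commuting_involution
    {g : Type*} [LieRing g] [LieAlgebra ℝ g]
    (σ τ : g →ₗ⁅ℝ⁆ g)
    (hσ : ∀ x, σ (σ x) = x) (hτ : ∀ x, τ (τ x) = x)
    (hcomm : ∀ x, σ (τ x) = τ (σ x))
    (p pPlus pMinus : Submodule ℝ g)
    (hp : ∀ x, x ∈ p ↔ σ x = -x)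
    (hpPlus : ∀ x, x ∈ pPlus ↔ (σ x = -x ∧ τ x = x))
    (hpMinus : ∀ x, x ∈ pMinus ↔ (σ x = -x ∧ τ x = -x))
    (aPlus a : Submodule ℝ g)
    (haPlus_le : aPlus ≤ pPlus)
    (haPlus_ab : ∀ x ∈ aPlus, ∀ y ∈ aPlus, ⁅x, y⁆ = 0)
    (haPlus_max : ∀ b : Submodule ℝ g, b ≤ pPlus →
      (∀ x ∈ b, ∀ y ∈ b, ⁅x, y⁆ = 0) → aPlus ≤ b → b = aPlus)
    (ha_le : a ≤ p)
    (ha_ab : ∀ x ∈ a, ∀ y ∈ a, ⁅x, y⁆ = 0)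
    (ha_max : ∀ b : Submodule ℝ g, b ≤ p →
      (∀ x ∈ b, ∀ y ∈ b, ⁅x, y⁆ = 0) → a ≤ b → b = a)
    (haPlus_a : aPlus ≤ a) :
    a = aPlus ⊔ (a ⊓ pMinus) ∧ ∀ x ∈ a, τ x ∈ a := by
  have key : ∀ ζ ∈ a, ((1/2 : ℝ) • (ζ + τ ζ) ∈ aPlus ∧ (1/2 : ℝ) • (ζ - τ ζ) ∈ a) := by
    intro ζ hζ
    set zp := (1/2 : ℝ) • (ζ + τ ζ) with hzp_def
    set zm := (1/2 : ℝ) • (ζ - τ ζ) with hzm_def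
    have hσζ : σ ζ = -ζ := (hp ζ).mp (ha_le hζ)
    have hστζ : σ (τ ζ) = -(τ ζ) := by rw [hcomm, hσζ, map_neg]
    -- zp ∈ pPlus
    have hzp_mem : zp ∈ pPlus := by
      rw [hpPlus]
      constructor
      · simp [hzp_def, map_smul, map_add, hσζ, hστζ, smul_add, neg_add, smul_neg]; module
      · simp [hzp_def, map_smul, map_add, hτ]; module
    -- zm ∈ pMinus
    have hzm_mem : zm ∈ pMinus := by
      rw [hpMinus]
      constructor
      · simp [hzm_def, map_smul, map_sub, hσζ, hστζ]; module
      · simp [hzm_def, map_smul, map_sub, hτ]; module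
    -- [zp, H] = 0 for H ∈ aPlus
    have hzp_comm : ∀ H ∈ aPlus, ⁅zp, H⁆ = 0 := by
      intro H hH
      have hτH : τ H = H := ((hpPlus H).mp (haPlus_le hH)).2
      have h1 : ⁅ζ, H⁆ = 0 := ha_ab ζ hζ H (haPlus_a hH)
      have h2 : ⁅τ ζ, H⁆ = 0 := by
        have := τ.map_lie ζ H
        rw [h1, map_zero, hτH] at this
        exact this.symm
      simp [hzp_def, smul_lie, add_lie, h1, h2]
    -- b = aPlus ⊔ span {zp} is abelian in pPlus, hence zp ∈ aPlus
    have hzp_aPlus : zp ∈ aPlus := by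
      have hb := haPlus_max (aPlus ⊔ Submodule.span ℝ {zp})
        (sup_le haPlus_le ((Submodule.span_singleton_le_iff_mem _ _).mpr hzp_mem))
        (abelian_sup_span aPlus zp hzp_comm haPlus_ab)
        le_sup_left
      rw [← hb]
      exact Submodule.mem_sup_right (Submodule.mem_span_singleton_self zp)
    -- [zm, η] = 0 for η ∈ a
    have hzm_comm : ∀ η ∈ a, ⁅zm, η⁆ = 0 := by
      intro η hη
      have h1 : ⁅ζ, η⁆ = 0 := ha_ab ζ hζ η hη
      have h2 : ⁅zp, η⁆ = 0 := ha_ab zp (haPlus_a hzp_aPlus) η hη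
      have hsum : zm = ζ - zp := by rw [hzp_def, hzm_def]; module
      rw [hsum, sub_lie, h1, h2, sub_zero]
    have hzm_a : zm ∈ a := by
      have hzm_p : zm ∈ p := (hp zm).mpr ((hpMinus zm).mp hzm_mem).1
      have hb := ha_max (a ⊔ Submodule.span ℝ {zm})
        (sup_le ha_le ((Submodule.span_singleton_le_iff_mem _ _).mpr hzm_p))
        (abelian_sup_span a zm hzm_comm ha_ab)
        le_sup_left
      rw [← hb]
      exact Submodule.mem_sup_right (Submodule.mem_span_singleton_self zm)
    exact ⟨hzp_aPlus, hzm_a⟩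
  constructor
  · apply le_antisymm
    · intro ζ hζ
      obtain ⟨h1, h2⟩ := key ζ hζ
      have hzm_mem : (1/2 : ℝ) • (ζ - τ ζ) ∈ pMinus := by
        have hσζ : σ ζ = -ζ := (hp ζ).mp (ha_le hζ)
        have hστζ : σ (τ ζ) = -(τ ζ) := by rw [hcomm, hσζ, map_neg]
        rw [hpMinus]
        constructor
        · simp [map_smul, map_sub, hσζ, hστζ]; module
        · simp [map_smul, map_sub, hτ]; module
      have : ζ = (1/2 : ℝ) • (ζ + τ ζ) + (1/2 : ℝ) • (ζ - τ ζ) := by module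
      rw [this]
      exact Submodule.add_mem _ (Submodule.mem_sup_left h1)
        (Submodule.mem_sup_right ⟨h2, hzm_mem⟩)
    · exact sup_le haPlus_a inf_le_left
  · intro ζ hζ
    obtain ⟨h1, h2⟩ := key ζ hζ
    have : τ ζ = (1/2 : ℝ) • (ζ + τ ζ) - (1/2 : ℝ) • (ζ - τ ζ) := by module
    rw [this]
    exact Submodule.sub_mem _ (haPlus_a h1) h2
end

section
/- Let 𝔥 be a finite-dimensional real vector space of commuting skew-symmetric endomorphisms of a real inner product space V. Then V decomposes orthogonally as V = V₀ ⊕ V₁ ⊕ ⋯ ⊕ V_k where every H ∈ 𝔥 acts as zero on V₀, each V_j (j ≥ 1) is 2-dimensional, and there exist linear forms α_j on 𝔥 and complex structures J_j on V_j such that H acts on V_j as α_j(H)·J_j. -/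
open Module

lemma exists_eig_ne {X : Type*} [NormedAddCommGroup X] [InnerProductSpace ℝ X]
    [FiniteDimensional ℝ X] {Y : Type*} [AddCommGroup Y] [Module ℝ Y]
    (T : X →ₗ[ℝ] X) (hT : T.IsSymmetric) (L : X →ₗ[ℝ] Y) (hL : L ≠ 0) :
    ∃ (μ : ℝ) (x : X), T x = μ • x ∧ L x ≠ 0 := by
  by_contra h
  push_neg at h
  apply hL
  have htop : (⨆ μ, Module.End.eigenspace T μ) = ⊤ := by
    have h2 := hT.orthogonalComplement_iSup_eigenspaces_eq_bot
    rwa [Submodule.orthogonal_eq_bot_iff] at h2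
  ext x
  have hx : x ∈ ⨆ μ, Module.End.eigenspace T μ := htop ▸ Submodule.mem_top
  simp only [LinearMap.zero_apply]
  refine Submodule.iSup_induction (motive := fun z => L z = 0) _ hx (fun μ y hy => h μ y ?_)
    (map_zero L) (fun a b ha hb => by rw [map_add, ha, hb, add_zero])
  exact Module.End.mem_eigenspace_iff.mp hy

/-- Extraction of one invariant plane. -/
lemma exists_plane {V : Type*} [NormedAddCommGroup V] [InnerProductSpace ℝ V]
    [FiniteDimensional ℝ V] (𝔥 : Submodule ℝ (V →ₗ[ℝ] V))
    (hskew : ∀ H ∈ 𝔥, ∀ v w : V, (inner ℝ (H v) w : ℝ) = - inner ℝ v (H w))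
    (hcomm : ∀ H ∈ 𝔥, ∀ K ∈ 𝔥, ∀ v, H (K v) = K (H v))
    (U : Submodule ℝ V) (hUinv : ∀ H ∈ 𝔥, ∀ v ∈ U, H v ∈ U)
    (H₀ : V →ₗ[ℝ] V) (hH₀ : H₀ ∈ 𝔥) (v₀ : V) (hv₀ : v₀ ∈ U) (hne : H₀ v₀ ≠ 0) :
    ∃ (W : Submodule ℝ V) (α : 𝔥 →ₗ[ℝ] ℝ) (J : V →ₗ[ℝ] V),
      W ≤ U ∧ Module.finrank ℝ W = 2 ∧ (∀ v ∈ W, J v ∈ W) ∧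
      (∀ v ∈ W, J (J v) = -v) ∧
      (∀ H : 𝔥, ∀ v ∈ W, (H : V →ₗ[ℝ] V) v = α H • J v) ∧
      (∀ H ∈ 𝔥, ∀ v ∈ W, H v ∈ W) := by
  classical
  -- step 1 : eigenvector of H₀² on U where H₀ does not vanish
  have hinv2 : ∀ v ∈ U, (H₀ ∘ₗ H₀) v ∈ U := fun v hv =>
    hUinv H₀ hH₀ _ (hUinv H₀ hH₀ v hv)
  set T₀ : U →ₗ[ℝ] U := (H₀ ∘ₗ H₀).restrict hinv2 with hT₀def
  have hT₀sym : T₀.IsSymmetric := by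
    intro x y
    simp only [Submodule.coe_inner, hT₀def, LinearMap.restrict_coe_apply, LinearMap.comp_apply]
    rw [hskew H₀ hH₀, hskew H₀ hH₀, neg_neg]
  have hLne : (H₀ ∘ₗ U.subtype) ≠ 0 := by
    intro h
    exact hne (by simpa using LinearMap.ext_iff.mp h ⟨v₀, hv₀⟩)
  obtain ⟨c, x, hx, hxne⟩ := exists_eig_ne T₀ hT₀sym (H₀ ∘ₗ U.subtype) hLne
  have hxne' : H₀ (x : V) ≠ 0 := by simpa using hxne
  have hxV : H₀ (H₀ (x : V)) = c • (x : V) := by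
    have := congrArg (Subtype.val) hx
    simpa [hT₀def, LinearMap.restrict_coe_apply] using this
  have hx0 : (x : V) ≠ 0 := fun h => hxne' (by rw [h, map_zero])
  -- c < 0
  have hcneg : c < 0 := by
    have h1 : (inner ℝ (H₀ (H₀ (x : V))) (x : V) : ℝ) = - ‖H₀ (x : V)‖ ^ 2 := by
      rw [hskew H₀ hH₀, real_inner_self_eq_norm_sq]
    rw [hxV, real_inner_smul_left, real_inner_self_eq_norm_sq] at h1
    have h2 : 0 < ‖(x : V)‖ ^ 2 := pow_pos (norm_pos_iff.mpr hx0) 2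
    have h3 : 0 < ‖H₀ (x : V)‖ ^ 2 := pow_pos (norm_pos_iff.mpr hxne') 2
    nlinarith
  have hc0 : c ≠ 0 := ne_of_lt hcneg
  -- step 2 : E = the c-eigenspace of H₀² inside U
  set E : Submodule ℝ V := U ⊓ LinearMap.ker (H₀ ∘ₗ H₀ - c • LinearMap.id) with hEdef
  have hmemE : ∀ v, v ∈ E ↔ v ∈ U ∧ H₀ (H₀ v) = c • v := by
    intro v
    simp [hEdef, LinearMap.mem_ker, sub_eq_zero, LinearMap.sub_apply]
  have hEinv : ∀ K ∈ 𝔥, ∀ v ∈ E, K v ∈ E := by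
    intro K hK v hv
    rw [hmemE] at hv ⊢
    refine ⟨hUinv K hK v hv.1, ?_⟩
    rw [hcomm H₀ hH₀ K hK, hcomm H₀ hH₀ K hK, hv.2, map_smul]
  have hEne : E ≠ ⊥ := by
    rw [Submodule.ne_bot_iff]
    exact ⟨x, (hmemE _).mpr ⟨x.2, hxV⟩, hx0⟩
  -- step 3 : minimal nonzero invariant subspace M of E
  set s : Set ℕ := {m | ∃ M : Submodule ℝ V,
    (M ≤ E ∧ M ≠ ⊥ ∧ ∀ K ∈ 𝔥, ∀ v ∈ M, K v ∈ M) ∧ finrank ℝ M = m} with hsdef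
  have hsne : s.Nonempty := ⟨finrank ℝ E, E, ⟨le_rfl, hEne, hEinv⟩, rfl⟩
  obtain ⟨M, ⟨hME, hMne, hMinv⟩, hMrank⟩ := Nat.sInf_mem hsne
  have hmin : ∀ M' : Submodule ℝ V, M' ≤ E → M' ≠ ⊥ → (∀ K ∈ 𝔥, ∀ v ∈ M', K v ∈ M') →
      finrank ℝ M ≤ finrank ℝ M' := by
    intro M' h1 h2 h3
    rw [hMrank]
    exact Nat.sInf_le ⟨M', ⟨h1, h2, h3⟩, rfl⟩
  have hM_E : ∀ v ∈ M, H₀ (H₀ v) = c • v := fun v hv => ((hmemE v).mp (hME hv)).2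
  have hMU : M ≤ U := hME.trans (by rw [hEdef]; exact inf_le_left)
  -- step 4 : every K∘H₀ is a scalar on M
  have hscal : ∀ K ∈ 𝔥, ∃ μ : ℝ, ∀ v ∈ M, K (H₀ v) = μ • v := by
    intro K hK
    have hinvKH : ∀ v ∈ M, (K ∘ₗ H₀) v ∈ M := fun v hv =>
      hMinv K hK _ (hMinv H₀ hH₀ v hv)
    set T : M →ₗ[ℝ] M := (K ∘ₗ H₀).restrict hinvKH with hTdef
    have hTsym : T.IsSymmetric := by
      intro a b
      simp only [Submodule.coe_inner, hTdef, LinearMap.restrict_coe_apply, LinearMap.comp_apply]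
      rw [hskew K hK, hskew H₀ hH₀, neg_neg, hcomm H₀ hH₀ K hK]
    have hsubne : M.subtype ≠ 0 := by
      obtain ⟨z, hzM, hz0⟩ := M.ne_bot_iff.mp hMne
      intro h
      exact hz0 (by simpa using LinearMap.ext_iff.mp h ⟨z, hzM⟩)
    obtain ⟨μ, y, hy, hyne⟩ := exists_eig_ne T hTsym M.subtype hsubne
    have hyV : K (H₀ (y : V)) = μ • (y : V) := by
      have := congrArg (Subtype.val) hy
      simpa [hTdef, LinearMap.restrict_coe_apply] using this
    have hy0 : (y : V) ≠ 0 := by simpa using hyne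
    set M' : Submodule ℝ V := M ⊓ LinearMap.ker (K ∘ₗ H₀ - μ • LinearMap.id) with hM'def
    have hmemM' : ∀ v, v ∈ M' ↔ v ∈ M ∧ K (H₀ v) = μ • v := by
      intro v
      simp [hM'def, LinearMap.mem_ker, sub_eq_zero, LinearMap.sub_apply]
    have hM'le : M' ≤ M := inf_le_left
    have hM'inv : ∀ L ∈ 𝔥, ∀ v ∈ M', L v ∈ M' := by
      intro L hL v hv
      rw [hmemM'] at hv ⊢
      refine ⟨hMinv L hL v hv.1, ?_⟩
      rw [hcomm H₀ hH₀ L hL, hcomm K hK L hL, hv.2, map_smul]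
    have hM'ne : M' ≠ ⊥ := by
      rw [Submodule.ne_bot_iff]
      exact ⟨y, (hmemM' _).mpr ⟨y.2, hyV⟩, hy0⟩
    have hM'eq : M' = M := Submodule.eq_of_le_of_finrank_le hM'le
      (hmin M' (hM'le.trans hME) hM'ne hM'inv)
    exact ⟨μ, fun v hv => ((hmemM' v).mp (hM'eq ▸ hv)).2⟩
  -- step 5 : the linear functional φ
  obtain ⟨u, huM, hu0⟩ := M.ne_bot_iff.mp hMne
  have hnu : (‖u‖ : ℝ) ^ 2 ≠ 0 := ne_of_gt (pow_pos (norm_pos_iff.mpr hu0) 2)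
  set φ : 𝔥 →ₗ[ℝ] ℝ :=
    { toFun := fun K => (inner ℝ ((K : V →ₗ[ℝ] V) (H₀ u)) u : ℝ) * (‖u‖ ^ 2)⁻¹
      map_add' := by
        intro a b
        simp only [Submodule.coe_add, LinearMap.add_apply, inner_add_left]
        ring
      map_smul' := by
        intro m a
        simp only [Submodule.coe_smul, LinearMap.smul_apply, real_inner_smul_left,
          RingHom.id_apply, smul_eq_mul]
        ring } with hφdef
  have hφ : ∀ K : 𝔥, ∀ v ∈ M, (K : V →ₗ[ℝ] V) (H₀ v) = φ K • v := by
    intro K v hv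
    obtain ⟨μ, hμ⟩ := hscal (K : V →ₗ[ℝ] V) K.2
    have hKu := hμ u huM
    have hφK : φ K = μ := by
      simp only [hφdef, LinearMap.coe_mk, AddHom.coe_mk]
      rw [hKu, real_inner_smul_left, real_inner_self_eq_norm_sq]
      field_simp
    rw [hφK]
    exact hμ v hv
  -- step 6 : every K acts on M as (φ K / c) • H₀
  have hKv : ∀ K : 𝔥, ∀ v ∈ M, (K : V →ₗ[ℝ] V) v = (φ K / c) • H₀ v := by
    intro K v hv
    have h1 : H₀ v ∈ M := hMinv H₀ hH₀ v hv
    have h2 := hφ K (H₀ v) h1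
    rw [hM_E v hv, map_smul] at h2
    have : (K : V →ₗ[ℝ] V) v = c⁻¹ • (φ K • H₀ v) := by
      rw [← h2, smul_smul, inv_mul_cancel₀ hc0, one_smul]
    rw [this, smul_smul, div_eq_mul_inv]
    ring_nf
  -- step 7 : the plane W
  set W : Submodule ℝ V := Submodule.span ℝ (Set.range ![u, H₀ u]) with hWdef
  have huW : u ∈ W := Submodule.subset_span ⟨0, rfl⟩
  have hH₀uW : H₀ u ∈ W := Submodule.subset_span ⟨1, rfl⟩
  have hH₀uM : H₀ u ∈ M := hMinv H₀ hH₀ u huM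
  have hWM : W ≤ M := by
    rw [hWdef, Submodule.span_le]
    rintro z ⟨i, rfl⟩
    fin_cases i
    · exact huM
    · exact hH₀uM
  have hWinvH₀ : ∀ v ∈ W, H₀ v ∈ W := by
    intro v hv
    induction hv using Submodule.span_induction with
    | mem z hz =>
      obtain ⟨i, rfl⟩ := hz
      fin_cases i
      · simpa using hH₀uW
      · show H₀ (H₀ u) ∈ W
        rw [hM_E u huM]
        exact W.smul_mem c huW
    | zero => rw [map_zero]; exact W.zero_mem
    | add a b _ _ ha hb => rw [map_add]; exact W.add_mem ha hb
    | smul t a _ ha => rw [map_smul]; exact W.smul_mem t ha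
  -- finrank W = 2
  have hH₀u0 : H₀ u ≠ 0 := by
    intro h
    have := hM_E u huM
    rw [h, map_zero] at this
    exact hu0 (by
      have := this.symm
      rwa [smul_eq_zero_iff_right hc0] at this)
  have horth : (inner ℝ u (H₀ u) : ℝ) = 0 := by
    have h1 := hskew H₀ hH₀ u u
    have h2 : (inner ℝ (H₀ u) u : ℝ) = inner ℝ u (H₀ u) := real_inner_comm _ _
    linarith [h1, h2]
  have hli : LinearIndependent ℝ ![u, H₀ u] := by
    rw [LinearIndependent.pair_iff]
    intro st t hst
    have h1 : (inner ℝ u (st • u + t • H₀ u) : ℝ) = 0 := by rw [hst, inner_zero_right]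
    have h2 : (inner ℝ (H₀ u) (st • u + t • H₀ u) : ℝ) = 0 := by rw [hst, inner_zero_right]
    rw [inner_add_right, real_inner_smul_right, real_inner_smul_right,
      real_inner_self_eq_norm_sq, horth] at h1
    rw [inner_add_right, real_inner_smul_right, real_inner_smul_right,
      real_inner_self_eq_norm_sq] at h2
    have horth' : (inner ℝ (H₀ u) u : ℝ) = 0 := by rw [real_inner_comm]; exact horth
    rw [horth'] at h2
    have hnu2 : (‖H₀ u‖ : ℝ) ^ 2 ≠ 0 := ne_of_gt (pow_pos (norm_pos_iff.mpr hH₀u0) 2)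
    constructor
    · have : st * ‖u‖ ^ 2 = 0 := by linarith
      exact (mul_eq_zero.mp this).resolve_right hnu
    · have : t * ‖H₀ u‖ ^ 2 = 0 := by linarith
      exact (mul_eq_zero.mp this).resolve_right hnu2
  have hWrank : finrank ℝ W = 2 := by
    rw [hWdef, finrank_span_eq_card hli, Fintype.card_fin]
  -- step 8 : J and α
  set r : ℝ := Real.sqrt (-c) with hrdef
  have hrpos : 0 < r := Real.sqrt_pos.mpr (by linarith)
  have hr0 : r ≠ 0 := ne_of_gt hrpos
  have hrr : r * r = -c := Real.mul_self_sqrt (by linarith)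
  refine ⟨W, (r / c) • φ, r⁻¹ • H₀, hWM.trans hMU, hWrank, ?_, ?_, ?_, ?_⟩
  · intro v hv
    rw [LinearMap.smul_apply]
    exact W.smul_mem _ (hWinvH₀ v hv)
  · intro v hv
    rw [LinearMap.smul_apply, LinearMap.smul_apply, map_smul, hM_E v (hWM hv),
      smul_smul, smul_smul]
    have hco : r⁻¹ * r⁻¹ * c = -1 := by
      field_simp
      linarith [hrr]
    rw [hco, neg_one_smul]
  · intro K v hv
    rw [hKv K v (hWM hv)]
    simp only [LinearMap.smul_apply, smul_smul, smul_eq_mul]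
    rw [show r / c * φ K * r⁻¹ = (r * r⁻¹) * (φ K / c) by ring, mul_inv_cancel₀ hr0, one_mul]
  · intro K hK v hv
    rw [hKv ⟨K, hK⟩ v (hWM hv)]
    exact W.smul_mem _ (hWinvH₀ v hv)

lemma aux_induction {V : Type*} [NormedAddCommGroup V] [InnerProductSpace ℝ V]
    [FiniteDimensional ℝ V] (𝔥 : Submodule ℝ (V →ₗ[ℝ] V))
    (hskew : ∀ H ∈ 𝔥, ∀ v w : V, (inner ℝ (H v) w : ℝ) = - inner ℝ v (H w))
    (hcomm : ∀ H ∈ 𝔥, ∀ K ∈ 𝔥, ∀ v, H (K v) = K (H v)) :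
    ∀ (n : ℕ) (U : Submodule ℝ V), finrank ℝ U ≤ n → (∀ H ∈ 𝔥, ∀ v ∈ U, H v ∈ U) →
    ∃ (k : ℕ) (V₀ : Submodule ℝ V) (W : Fin k → Submodule ℝ V)
      (α : Fin k → (𝔥 →ₗ[ℝ] ℝ)) (J : Fin k → (V →ₗ[ℝ] V)),
      V₀ ≤ U ∧ (∀ i, W i ≤ U) ∧
      (∀ v ∈ V₀, ∀ i : Fin k, ∀ w ∈ W i, (inner ℝ v w : ℝ) = 0) ∧
      (∀ i j : Fin k, i ≠ j → ∀ v ∈ W i, ∀ w ∈ W j, (inner ℝ v w : ℝ) = 0) ∧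
      (V₀ ⊔ (⨆ i, W i) = U) ∧
      (∀ H ∈ 𝔥, ∀ v ∈ V₀, H v = 0) ∧
      (∀ i, Module.finrank ℝ (W i) = 2) ∧
      (∀ i, ∀ v ∈ W i, J i v ∈ W i) ∧
      (∀ i, ∀ v ∈ W i, J i (J i v) = -v) ∧
      (∀ i, ∀ H : 𝔥, ∀ v ∈ W i, (H : V →ₗ[ℝ] V) v = α i H • J i v) := by
  intro n
  induction n with
  | zero =>
    intro U hrank _
    have hUbot : U = ⊥ := by
      rw [← Submodule.finrank_eq_zero (R := ℝ) (M := V)]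
      omega
    refine ⟨0, U, Fin.elim0, Fin.elim0, Fin.elim0, le_rfl, fun i => i.elim0,
      fun v _ i => i.elim0, fun i => i.elim0, by simp, ?_, fun i => i.elim0,
      fun i => i.elim0, fun i => i.elim0, fun i => i.elim0⟩
    intro H _ v hv
    rw [hUbot, Submodule.mem_bot] at hv
    rw [hv, map_zero]
  | succ n ih =>
    intro U hrank hUinv
    by_cases hA : ∀ H ∈ 𝔥, ∀ v ∈ U, H v = 0
    · exact ⟨0, U, Fin.elim0, Fin.elim0, Fin.elim0, le_rfl, fun i => i.elim0,
        fun v _ i => i.elim0, fun i => i.elim0, by simp, hA, fun i => i.elim0,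
        fun i => i.elim0, fun i => i.elim0, fun i => i.elim0⟩
    · push_neg at hA
      obtain ⟨H₀, hH₀, v₀, hv₀, hne⟩ := hA
      obtain ⟨W₀, α₀, J₀, hW₀U, hW₀rank, hJ₀mem, hJ₀J₀, hact₀, hW₀inv⟩ :=
        exists_plane 𝔥 hskew hcomm U hUinv H₀ hH₀ v₀ hv₀ hne
      -- the complement inside U
      set U' : Submodule ℝ V := U ⊓ W₀ᗮ with hU'def
      have hU'U : U' ≤ U := inf_le_left
      have hU'W₀ : U' ≤ W₀ᗮ := inf_le_right
      have hU'inv : ∀ H ∈ 𝔥, ∀ v ∈ U', H v ∈ U' := by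
        intro H hH v hv
        obtain ⟨hvU, hvO⟩ := hv
        refine ⟨hUinv H hH v hvU, ?_⟩
        intro w hw
        have h1 : (inner ℝ (H w) v : ℝ) = 0 := hvO (H w) (hW₀inv H hH w hw)
        rw [real_inner_comm, hskew H hH, neg_eq_zero, real_inner_comm]
        exact h1
      have hW₀ne : W₀ ≠ ⊥ := by
        intro h
        rw [h] at hW₀rank
        simp at hW₀rank
      obtain ⟨w₀, hw₀W, hw₀0⟩ := W₀.ne_bot_iff.mp hW₀ne
      have hw₀nU' : w₀ ∉ U' := by
        intro h
        exact hw₀0 (inner_self_eq_zero.mp (h.2 w₀ hw₀W))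
      have hU'lt : U' < U := lt_of_le_of_ne hU'U (fun h => hw₀nU' (h ▸ hW₀U hw₀W))
      have hle : finrank ℝ U' ≤ n := by
        have := Submodule.finrank_lt_finrank_of_lt hU'lt
        omega
      obtain ⟨k, V₀, W', α', J', hV₀U', hW'U', horthV₀, horthWW, hsup, hker, hrank2,
        hJmem', hJJ', hact'⟩ := ih U' hle hU'inv
      -- U = W₀ ⊔ U'
      have hUeq : W₀ ⊔ U' = U := by
        refine le_antisymm (sup_le hW₀U hU'U) ?_
        intro v hv
        obtain ⟨y, hy, z, hz, rfl⟩ := W₀.exists_add_mem_mem_orthogonal v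
        have hzU : z ∈ U := by
          have : z = y + z - y := by abel
          rw [this]
          exact U.sub_mem hv (hW₀U hy)
        exact Submodule.add_mem_sup hy ⟨hzU, hz⟩
      refine ⟨k + 1, V₀, Fin.cons W₀ W', Fin.cons α₀ α', Fin.cons J₀ J',
        hV₀U'.trans hU'U, ?_, ?_, ?_, ?_, hker, ?_, ?_, ?_, ?_⟩
      · intro i
        induction i using Fin.cases with
        | zero => simpa using hW₀U
        | succ i => simpa using (hW'U' i).trans hU'U
      · intro v hv i
        induction i using Fin.cases with
        | zero =>
          intro w hw
          rw [Fin.cons_zero] at hw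
          rw [real_inner_comm]
          exact (hV₀U' hv).2 w hw
        | succ i =>
          intro w hw
          rw [Fin.cons_succ] at hw
          exact horthV₀ v hv i w hw
      · intro i j hij
        induction i using Fin.cases with
        | zero =>
          induction j using Fin.cases with
          | zero => exact absurd rfl hij
          | succ j =>
            intro v hv w hw
            rw [Fin.cons_zero] at hv
            rw [Fin.cons_succ] at hw
            exact (hU'W₀ (hW'U' j hw)) v hv
        | succ i =>
          induction j using Fin.cases with
          | zero =>
            intro v hv w hw
            rw [Fin.cons_succ] at hv
            rw [Fin.cons_zero] at hw
            rw [real_inner_comm]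
            exact (hU'W₀ (hW'U' i hv)) w hw
          | succ j =>
            intro v hv w hw
            rw [Fin.cons_succ] at hv hw
            refine horthWW i j (fun h => hij ?_) v hv w hw
            rw [h]
      · -- sup equality
        have hcons : (⨆ i : Fin (k + 1), Fin.cons W₀ W' i) = W₀ ⊔ ⨆ i, W' i := by
          refine le_antisymm (iSup_le ?_) (sup_le ?_ (iSup_le fun i => ?_))
          · intro i
            induction i using Fin.cases with
            | zero => simpa using le_sup_left
            | succ i =>
              simp only [Fin.cons_succ]
              exact le_sup_of_le_right (le_iSup _ i)
          · have h0 : W₀ ≤ (Fin.cons W₀ W' : Fin (k+1) → Submodule ℝ V) 0 := by rw [Fin.cons_zero]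
            exact h0.trans (le_iSup (fun i : Fin (k+1) => Fin.cons W₀ W' i) 0)
          · have h0 : W' i ≤ (Fin.cons W₀ W' : Fin (k+1) → Submodule ℝ V) i.succ := by rw [Fin.cons_succ]
            exact h0.trans (le_iSup (fun i : Fin (k+1) => Fin.cons W₀ W' i) i.succ)
        rw [hcons, ← hUeq, ← hsup]
        rw [sup_left_comm]
      · intro i
        induction i using Fin.cases with
        | zero => exact hW₀rank
        | succ i => exact hrank2 i
      · intro i
        induction i using Fin.cases with
        | zero => simpa using hJ₀mem
        | succ i => simpa using hJmem' i
      · intro i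
        induction i using Fin.cases with
        | zero => simpa using hJ₀J₀
        | succ i => simpa using hJJ' i
      · intro i
        induction i using Fin.cases with
        | zero => simpa using hact₀
        | succ i => simpa using hact' i




/-- Simultaneous block diagonalization of a commuting family of skew-symmetric
endomorphisms: `V` splits orthogonally into a common kernel `V₀` and 2-dimensional
invariant planes on which each `H ∈ 𝔥` acts as `α j H • J j` for a linear form `α j`
and a complex structure `J j`. -/
theorem simultaneous_block_diagonalization_skew
    {V : Type*} [NormedAddCommGroup V] [InnerProductSpace ℝ V] [FiniteDimensional ℝ V]
    (𝔥 : Submodule ℝ (V →ₗ[ℝ] V))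
    (hskew : ∀ H ∈ 𝔥, ∀ v w : V, (inner ℝ (H v) w : ℝ) = - inner ℝ v (H w))
    (hcomm : ∀ H ∈ 𝔥, ∀ K ∈ 𝔥, ∀ v, H (K v) = K (H v)) :
    ∃ (k : ℕ) (V₀ : Submodule ℝ V) (W : Fin k → Submodule ℝ V)
      (α : Fin k → (𝔥 →ₗ[ℝ] ℝ)) (J : Fin k → (V →ₗ[ℝ] V)),
      (∀ v ∈ V₀, ∀ i : Fin k, ∀ w ∈ W i, (inner ℝ v w : ℝ) = 0) ∧
      (∀ i j : Fin k, i ≠ j → ∀ v ∈ W i, ∀ w ∈ W j, (inner ℝ v w : ℝ) = 0) ∧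
      (V₀ ⊔ (⨆ i, W i) = ⊤) ∧
      (∀ H ∈ 𝔥, ∀ v ∈ V₀, H v = 0) ∧
      (∀ i, Module.finrank ℝ (W i) = 2) ∧
      (∀ i, ∀ v ∈ W i, J i v ∈ W i) ∧
      (∀ i, ∀ v ∈ W i, J i (J i v) = -v) ∧
      (∀ i, ∀ H : 𝔥, ∀ v ∈ W i, (H : V →ₗ[ℝ] V) v = α i H • J i v) := by
  obtain ⟨k, V₀, W, α, J, _, _, h3, h4, h5, h6, h7, h8, h9, h10⟩ :=
    aux_induction 𝔥 hskew hcomm (finrank ℝ V) ⊤ (by rw [finrank_top]) 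
      (fun H _ v _ => Submodule.mem_top)
  exact ⟨k, V₀, W, α, J, h3, h4, h5, h6, h7, h8, h9, h10⟩
end

section
/- Let a₁, …, a_k be reals and define the sequence of vectors v_ℓ = (a₁^{3^ℓ}, …, a_k^{3^ℓ}) ∈ ℝ^k for ℓ ≥ 0. If 0 < |a₁| < ⋯ < |a_k|, then the span of {v_ℓ : ℓ ≥ 0} is all of ℝ^k. -/
open Filter Finset

lemma key_vanish {k : ℕ} (a : Fin k → ℝ)
    (ha0 : ∀ j, 0 < |a j|)
    (hmono : StrictMono fun j => |a j|)
    (w : Fin k → ℝ) (hw : ∀ ℓ : ℕ, ∑ j, w j * a j ^ (3 ^ ℓ) = 0) : w = 0 := by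
  by_contra hne
  have hs : (Finset.univ.filter fun j => w j ≠ 0).Nonempty := by
    by_contra h
    apply hne
    funext j
    rw [Finset.not_nonempty_iff_eq_empty, Finset.filter_eq_empty_iff] at h
    simpa using h (Finset.mem_univ j)
  set s := Finset.univ.filter fun j => w j ≠ 0 with hs_def
  set m := s.max' hs with hm_def
  have hm_mem : m ∈ s := s.max'_mem hs
  have hwm : w m ≠ 0 := (Finset.mem_filter.mp hm_mem).2
  have hgt : ∀ j, m < j → w j = 0 := by
    intro j hj
    by_contra h
    exact absurd (s.le_max' j (Finset.mem_filter.mpr ⟨Finset.mem_univ j, h⟩))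
      (not_le.mpr hj)
  have ham : a m ≠ 0 := by
    intro h
    have := ha0 m
    rw [h] at this
    simp at this
  -- the key equation
  have heq : ∀ ℓ : ℕ, w m = -∑ j ∈ Finset.univ.erase m,
      w j * (a j / a m) ^ (3 ^ ℓ) := by
    intro ℓ
    have hsum := hw ℓ
    rw [← Finset.add_sum_erase _ _ (Finset.mem_univ m)] at hsum
    have hpow : (a m : ℝ) ^ (3 ^ ℓ) ≠ 0 := pow_ne_zero _ ham
    have key : w m * a m ^ (3 ^ ℓ) = -∑ j ∈ Finset.univ.erase m, w j * a j ^ (3 ^ ℓ) := by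
      linarith [hsum]
    calc w m = (w m * a m ^ (3 ^ ℓ)) / a m ^ (3 ^ ℓ) := by
          rw [mul_div_assoc, div_self hpow, mul_one]
      _ = (-∑ j ∈ Finset.univ.erase m, w j * a j ^ (3 ^ ℓ)) / a m ^ (3 ^ ℓ) := by rw [key]
      _ = -∑ j ∈ Finset.univ.erase m, w j * (a j / a m) ^ (3 ^ ℓ) := by
          rw [neg_div, Finset.sum_div]
          congr 1
          refine Finset.sum_congr rfl fun j hj => ?_
          rw [div_pow]
          ring
  -- the RHS tends to 0
  have htend : Tendsto (fun ℓ : ℕ => -∑ j ∈ Finset.univ.erase m,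
      w j * (a j / a m) ^ (3 ^ ℓ)) atTop (nhds 0) := by
    rw [show (0 : ℝ) = -∑ j ∈ Finset.univ.erase m, (0 : ℝ) by simp]
    apply Tendsto.neg
    apply tendsto_finset_sum
    intro j hj
    rcases lt_trichotomy j m with h | h | h
    · have habs : |a j / a m| < 1 := by
        rw [abs_div, div_lt_one (ha0 m)]
        exact hmono h
      have h1 : Tendsto (fun n : ℕ => (a j / a m) ^ n) atTop (nhds 0) :=
        tendsto_pow_atTop_nhds_zero_of_abs_lt_one habs
      have h2 : Tendsto (fun ℓ : ℕ => 3 ^ ℓ) atTop atTop :=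
        tendsto_pow_atTop_atTop_of_one_lt (α := ℕ) (by norm_num)
      have := (h1.comp h2).const_mul (w j)
      simpa using this
    · exact absurd h (Finset.ne_of_mem_erase hj)
    · simp [hgt j h]
  have : Tendsto (fun _ : ℕ => w m) atTop (nhds 0) := by
    rw [tendsto_congr heq]
    exact htend
  exact hwm (tendsto_nhds_unique tendsto_const_nhds this)

/-- Generalized Vandermonde: if `0 < |a 0| < ⋯ < |a (k-1)|`, then the vectors
`(a j ^ (3 ^ ℓ))_j`, `ℓ ≥ 0`, span all of `ℝ^k`. -/
theorem span_of_odd_power_vectors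
    {k : ℕ} (a : Fin k → ℝ)
    (ha0 : ∀ j, 0 < |a j|)
    (hmono : StrictMono fun j => |a j|) :
    Submodule.span ℝ {x : Fin k → ℝ | ∃ ℓ : ℕ, x = fun j => a j ^ (3 ^ ℓ)} = ⊤ := by
  by_contra hne
  obtain ⟨f, hf0, hfmap⟩ := Submodule.exists_dual_map_eq_bot_of_lt_top
    (lt_top_iff_ne_top.mpr hne) inferInstance
  have hker : ∀ x ∈ ({x : Fin k → ℝ | ∃ ℓ : ℕ, x = fun j => a j ^ (3 ^ ℓ)} : Set _),
      f x = 0 := by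
    intro x hx
    have : f x ∈ (Submodule.span ℝ {x : Fin k → ℝ | ∃ ℓ : ℕ,
        x = fun j => a j ^ (3 ^ ℓ)}).map f :=
      Submodule.mem_map_of_mem (Submodule.subset_span hx)
    rw [hfmap] at this
    simpa using this
  set w : Fin k → ℝ := fun j => f fun i => if j = i then 1 else 0 with hw_def
  have hw : ∀ ℓ : ℕ, ∑ j, w j * a j ^ (3 ^ ℓ) = 0 := by
    intro ℓ
    have := hker (fun j => a j ^ (3 ^ ℓ)) ⟨ℓ, rfl⟩
    rw [LinearMap.pi_apply_eq_sum_univ] at this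
    rw [← this]
    refine Finset.sum_congr rfl fun j _ => ?_
    simp [hw_def, smul_eq_mul, mul_comm]
  have hw0 : w = 0 := key_vanish a ha0 hmono w hw
  apply hf0
  refine LinearMap.ext fun x => ?_
  show f x = 0
  rw [LinearMap.pi_apply_eq_sum_univ]
  simp only [smul_eq_mul]
  have : ∀ j, f (fun i => if j = i then 1 else 0) = 0 := fun j => by
    have := congrFun hw0 j
    simpa [hw_def] using this
  simp [this]
end
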